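/- Fix λ > 0, μ > 0, c₁, c₂ ∈ (0,1) with c₁ ≠ c₂, set a = c₂/c₁, and define q : Z_+² → R_+ by q(i,j) = (Γ(i+λ+1)/(Γ(λ+1)Γ(i+1))) · (Γ(j+μ)/(Γ(μ)Γ(j+1))) · (1/c₁) ∫₁^∞ s^{-(2+1/c₁+λ)} (1−s^{-1})^i (1−s^{-a})^j s^{-aμ} ds. Then for all x, y > 0, lim_{n→∞} q(⌊n^{c₁} x⌋, ⌊n^{c₂} y⌋) / n^{-(1+c₁+c₂)} = (x^λ y^{μ-1}/(c₁ Γ(λ+1) Γ(μ))) ∫₀^∞ z^{-(2+1/c₁+λ+aμ)} e^{-(x/z + y/z^a)} dz. -/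

import Mathlib

open Real Filter Topology MeasureTheory Set


lemma prod_range_add_gamma (d : ℝ) (hd : 0 < d) (n : ℕ) :
    ∏ j ∈ Finset.range (n + 1), (d + j) = Gamma (d + n + 1) / Gamma d := by
  induction n with
  | zero =>
      simp [Real.Gamma_add_one hd.ne']
      field_simp
  | succ n ih =>
      rw [Finset.prod_range_succ, ih]
      have h1 : Gamma (d + ↑(n+1) + 1) = (d + n + 1) * Gamma (d + n + 1) := by
        have : d + ((n:ℕ):ℝ) + 1 + 1 = d + ((n+1 : ℕ):ℝ) + 1 := by push_cast; ring
        rw [← this, ← Real.Gamma_add_one (by positivity)]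
      rw [h1]
      have hΓd : Gamma d ≠ 0 := (Real.Gamma_pos_of_pos hd).ne'
      push_cast
      field_simp
      ring

lemma gamma_ratio_aux (d : ℝ) (hd : 0 < d) :
    Tendsto (fun n : ℕ => Gamma ((n : ℝ) + d + 1) / (Gamma ((n : ℝ) + 1) * (n : ℝ) ^ d))
      atTop (𝓝 1) := by
  have h0 : Tendsto (fun n : ℕ => Real.GammaSeq d n / Gamma d) atTop (𝓝 1) := by
    have := (Real.GammaSeq_tendsto_Gamma d).div_const (Gamma d)
    rwa [div_self (Real.Gamma_pos_of_pos hd).ne'] at this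
  have heq : ∀ᶠ n : ℕ in atTop, Real.GammaSeq d n / Gamma d
      = ((n : ℝ) ^ d * Gamma ((n:ℝ) + 1)) / Gamma ((n:ℝ) + d + 1) := by
    filter_upwards [eventually_ge_atTop 1] with n hn
    have hg : Gamma ((n:ℝ) + 1) = (Nat.factorial n : ℝ) := by
      exact_mod_cast Real.Gamma_nat_eq_factorial n
    rw [Real.GammaSeq, prod_range_add_gamma d hd n, hg]
    have h2 : (d + (n:ℝ) + 1) = ((n:ℝ) + d + 1) := by ring
    rw [h2]
    have hΓd : Gamma d ≠ 0 := (Real.Gamma_pos_of_pos hd).ne'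
    have hΓ : Gamma ((n:ℝ) + d + 1) ≠ 0 := by
      have : (0:ℝ) < (n:ℝ) + d + 1 := by positivity
      exact (Real.Gamma_pos_of_pos this).ne'
    field_simp
  have h1 : Tendsto (fun n : ℕ => ((n : ℝ) ^ d * Gamma ((n:ℝ) + 1)) / Gamma ((n:ℝ) + d + 1))
      atTop (𝓝 1) := h0.congr' heq
  have h2 := h1.inv₀ one_ne_zero
  rw [inv_one] at h2
  refine h2.congr' ?_
  filter_upwards [eventually_ge_atTop 1] with n hn
  have hn' : (0:ℝ) < n := by exact_mod_cast hn
  rw [inv_div, mul_comm ((n:ℝ) ^ d)]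

lemma gamma_ratio (d : ℝ) (hd : 0 < d) :
    Tendsto (fun n : ℕ => Gamma ((n : ℝ) + d) / (Gamma ((n : ℝ) + 1) * (n : ℝ) ^ (d - 1)))
      atTop (𝓝 1) := by
  have base := gamma_ratio_aux d hd
  have hfrac : Tendsto (fun n : ℕ => (n : ℝ) / ((n:ℝ) + d)) atTop (𝓝 1) := by
    have : Tendsto (fun n : ℕ => 1 / (1 + d / (n:ℝ))) atTop (𝓝 (1 / (1 + 0))) := by
      refine Tendsto.div tendsto_const_nhds ?_ (by norm_num)
      exact tendsto_const_nhds.add (tendsto_const_nhds.div_atTop tendsto_natCast_atTop_atTop)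
    rw [add_zero, div_one] at this
    refine this.congr' ?_
    filter_upwards [eventually_ge_atTop 1] with n hn
    have hn' : (0:ℝ) < n := by exact_mod_cast hn
    field_simp
  have := base.mul hfrac
  rw [mul_one] at this
  refine this.congr' ?_
  filter_upwards [eventually_ge_atTop 1] with n hn
  have hn' : (0:ℝ) < n := by exact_mod_cast hn
  have hnd : (0:ℝ) < (n:ℝ) + d := by positivity
  have hG : Gamma ((n:ℝ) + d + 1) = ((n:ℝ) + d) * Gamma ((n:ℝ) + d) := by
    rw [Real.Gamma_add_one hnd.ne']
  have hr : (n:ℝ) ^ (d - 1) = (n:ℝ) ^ d / (n:ℝ) := by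
    rw [Real.rpow_sub hn', Real.rpow_one]
  rw [hG, hr]
  have h1 : Gamma ((n:ℝ)+1) ≠ 0 := (Real.Gamma_pos_of_pos (by positivity)).ne'
  have h2 : (n:ℝ) ^ d ≠ 0 := (Real.rpow_pos_of_pos hn' d).ne'
  field_simp


-- (n:ℝ)^c → ∞
lemma rpow_nat_tendsto (c : ℝ) (hc : 0 < c) :
    Tendsto (fun n : ℕ => (n : ℝ) ^ c) atTop atTop :=
  (tendsto_rpow_atTop hc).comp tendsto_natCast_atTop_atTop

lemma floor_div_tendsto (c w : ℝ) (hc : 0 < c) (hw : 0 < w) :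
    Tendsto (fun n : ℕ => (⌊(n:ℝ) ^ c * w⌋₊ : ℝ) / (n : ℝ) ^ c) atTop (𝓝 w) := by
  have ht := rpow_nat_tendsto c hc
  have hlow : Tendsto (fun n : ℕ => w - ((n:ℝ) ^ c)⁻¹) atTop (𝓝 w) := by
    have h2 : Tendsto (fun n : ℕ => ((n:ℝ) ^ c)⁻¹) atTop (𝓝 0) := ht.inv_tendsto_atTop
    simpa using (tendsto_const_nhds (x := w)).sub h2
  refine tendsto_of_tendsto_of_tendsto_of_le_of_le' hlow tendsto_const_nhds ?_ ?_
  · filter_upwards [ht.eventually_ge_atTop 1] with n hn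
    have hn0 : (0:ℝ) < (n:ℝ)^c := lt_of_lt_of_le one_pos hn
    rw [sub_le_iff_le_add, div_add' _ _ _ hn0.ne', le_div_iff₀ hn0]
    have h1 : (n:ℝ)^c * w < (⌊(n:ℝ)^c * w⌋₊ : ℝ) + 1 := Nat.lt_floor_add_one _
    have : ((n:ℝ)^c)⁻¹ * (n:ℝ)^c = 1 := inv_mul_cancel₀ hn0.ne'
    nlinarith [h1]
  · filter_upwards [ht.eventually_ge_atTop 1] with n hn
    have hn0 : (0:ℝ) < (n:ℝ)^c := lt_of_lt_of_le one_pos hn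
    rw [div_le_iff₀ hn0]
    have := Nat.floor_le (by positivity : (0:ℝ) ≤ (n:ℝ)^c * w)
    linarith

lemma floor_tendsto_atTop (c w : ℝ) (hc : 0 < c) (hw : 0 < w) :
    Tendsto (fun n : ℕ => ⌊(n:ℝ) ^ c * w⌋₊) atTop atTop := by
  refine tendsto_nat_floor_atTop.comp ?_
  exact (rpow_nat_tendsto c hc).atTop_mul_const hw

-- (1 - (u n)⁻¹) ^ (k n) → exp (-r)  when  u n → ∞ and (k n)/(u n) → r... specialized:
lemma pow_tendsto_exp (u : ℕ → ℝ) (k : ℕ → ℕ) (r v : ℝ) (hv : 0 < v)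
    (hu : Tendsto u atTop atTop)
    (hk : Tendsto (fun n => (k n : ℝ) / u n) atTop (𝓝 r)) :
    Tendsto (fun n => (1 - (u n * v)⁻¹) ^ k n) atTop (𝓝 (Real.exp (-(r / v)))) := by
  have hlog : Tendsto (fun s : ℝ => s * Real.log (1 + (-v⁻¹) / s)) atTop (𝓝 (-v⁻¹)) :=
    Real.tendsto_mul_log_one_add_div_atTop (-v⁻¹)
  have hcomp : Tendsto (fun n => u n * Real.log (1 + (-v⁻¹) / u n)) atTop (𝓝 (-v⁻¹)) :=
    hlog.comp hu
  have hmul : Tendsto (fun n => ((k n : ℝ) / u n) * (u n * Real.log (1 + (-v⁻¹) / u n)))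
      atTop (𝓝 (r * -v⁻¹)) := hk.mul hcomp
  have key : Tendsto (fun n => (k n : ℝ) * Real.log (1 - (u n * v)⁻¹)) atTop (𝓝 (-(r/v))) := by
    have : r * -v⁻¹ = -(r/v) := by field_simp
    rw [← this]
    refine hmul.congr' ?_
    filter_upwards [hu.eventually_gt_atTop 0] with n hn
    have harg : 1 + (-v⁻¹) / u n = 1 - (u n * v)⁻¹ := by
      rw [mul_inv]
      field_simp
      ring
    rw [harg]
    field_simp
  have := (Real.continuous_exp.tendsto _).comp key
  refine this.congr' ?_
  filter_upwards [hu.eventually_gt_atTop v⁻¹] with n hn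
  have hv' : 0 < v⁻¹ := inv_pos.mpr hv
  have huv : 1 < u n * v := by
    have : v⁻¹ * v < u n * v := by
      exact mul_lt_mul_of_pos_right hn hv
    rwa [inv_mul_cancel₀ hv.ne'] at this
  have hpos : 0 < 1 - (u n * v)⁻¹ := by
    have : (u n * v)⁻¹ < 1 := by
      rw [inv_lt_one_iff₀]; right; exact huv
    linarith
  simp only [Function.comp_apply]
  rw [Real.exp_nat_mul, Real.exp_log hpos]


lemma pow_div_factorial_le_exp (t : ℝ) (ht : 0 ≤ t) (k : ℕ) :
    t ^ k / (Nat.factorial k) ≤ Real.exp t := by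
  have h := Real.sum_le_exp_of_nonneg ht (k + 1)
  refine le_trans ?_ h
  refine Finset.single_le_sum (f := fun i => t ^ i / (Nat.factorial i)) ?_ (Finset.self_mem_range_succ k)
  intro i _
  positivity

lemma bound_integrable (p A B a : ℝ) (hp : 1 < p) (hA : 0 < A) (hB : 0 < B) (ha : 0 < a) :
    IntegrableOn (fun z : ℝ => z ^ (-p) * Real.exp (-(A / z + B / z ^ a))) (Ioi 0) := by
  have hmeas : Measurable fun z : ℝ => z ^ (-p) * Real.exp (-(A / z + B / z ^ a)) := by
    fun_prop
  have hsplit : Ioc (0:ℝ) 1 ∪ Ioi 1 = Ioi 0 := Set.Ioc_union_Ioi_eq_Ioi zero_le_one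
  rw [← hsplit]
  refine IntegrableOn.union ?_ ?_
  · -- bounded on Ioc 0 1
    set k := ⌈p⌉₊ with hk
    have hkp : p ≤ (k : ℝ) := Nat.le_ceil p
    refine Integrable.mono' (g := fun _ => (Nat.factorial k : ℝ) * A⁻¹ ^ k)
      (integrable_const _) hmeas.aestronglyMeasurable ?_
    rw [ae_restrict_iff' measurableSet_Ioc]
    refine Filter.Eventually.of_forall fun z hz => ?_
    obtain ⟨hz0, hz1⟩ := hz
    have hzp : (0:ℝ) < z ^ (-p) := Real.rpow_pos_of_pos hz0 _
    have hexp : Real.exp (-(A / z + B / z ^ a)) ≤ (Nat.factorial k : ℝ) * (z / A) ^ k := by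
      have h1 : (A / z) ^ k / (Nat.factorial k) ≤ Real.exp (A / z) := by
        exact _root_.pow_div_factorial_le_exp _ (by positivity) k
      have h2 : Real.exp (A / z) ≤ Real.exp (A / z + B / z ^ a) := by
        apply Real.exp_le_exp.2
        have : 0 < z ^ a := Real.rpow_pos_of_pos hz0 a
        have : 0 ≤ B / z ^ a := by positivity
        linarith
      have h3 : (A / z) ^ k / (Nat.factorial k) ≤ Real.exp (A / z + B / z ^ a) := h1.trans h2
      rw [Real.exp_neg]
      rw [inv_le_iff_one_le_mul₀ (Real.exp_pos _)]
      have hAz : (0:ℝ) < (A / z) ^ k := by positivity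
      have hfk : (0:ℝ) < (Nat.factorial k : ℝ) := by positivity
      have hzA : (z / A) ^ k = ((A / z) ^ k)⁻¹ := by
        rw [← inv_pow, inv_div]
      calc (1:ℝ) = ((A / z) ^ k / (Nat.factorial k)) * ((Nat.factorial k : ℝ) * ((A/z) ^ k)⁻¹) := by
            field_simp
        _ ≤ Real.exp (A / z + B / z ^ a) * ((Nat.factorial k : ℝ) * ((A/z) ^ k)⁻¹) := by
            apply mul_le_mul_of_nonneg_right h3
            positivity
        _ = (Nat.factorial k : ℝ) * (z / A) ^ k * Real.exp (A / z + B / z ^ a) := by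
            rw [hzA]; ring
    have hnorm : ‖z ^ (-p) * Real.exp (-(A / z + B / z ^ a))‖
        = z ^ (-p) * Real.exp (-(A / z + B / z ^ a)) := by
      rw [Real.norm_eq_abs, abs_of_nonneg (by positivity)]
    rw [hnorm]
    calc z ^ (-p) * Real.exp (-(A / z + B / z ^ a))
        ≤ z ^ (-p) * ((Nat.factorial k : ℝ) * (z / A) ^ k) := by
          exact mul_le_mul_of_nonneg_left hexp hzp.le
      _ = (Nat.factorial k : ℝ) * A⁻¹ ^ k * (z ^ (-p) * z ^ (k:ℝ)) := by
          rw [div_pow, ← Real.rpow_natCast z k]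
          have hApow : (0:ℝ) < A ^ k := by positivity
          field_simp
          ring
          rw [← mul_pow, mul_inv_cancel₀ hA.ne', one_pow]
      _ = (Nat.factorial k : ℝ) * A⁻¹ ^ k * z ^ ((k:ℝ) - p) := by
          rw [← Real.rpow_add hz0]; ring_nf
      _ ≤ (Nat.factorial k : ℝ) * A⁻¹ ^ k * 1 := by
          apply mul_le_mul_of_nonneg_left
          · exact Real.rpow_le_one hz0.le hz1 (by linarith)
          · positivity
      _ = (Nat.factorial k : ℝ) * A⁻¹ ^ k := mul_one _
  · -- on Ioi 1 bounded by z ^ (-p)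
    refine Integrable.mono' (g := fun z : ℝ => z ^ (-p))
      (integrableOn_Ioi_rpow_of_lt (by linarith) one_pos) hmeas.aestronglyMeasurable ?_
    rw [ae_restrict_iff' measurableSet_Ioi]
    refine Filter.Eventually.of_forall fun z hz => ?_
    have hz0 : (0:ℝ) < z := lt_trans one_pos hz
    have hzp : (0:ℝ) < z ^ (-p) := Real.rpow_pos_of_pos hz0 _
    rw [Real.norm_eq_abs, abs_of_nonneg (by positivity)]
    have : Real.exp (-(A / z + B / z ^ a)) ≤ 1 := by
      rw [Real.exp_le_one_iff]
      have h1 : 0 < z ^ a := Real.rpow_pos_of_pos hz0 a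
      have h2 : 0 ≤ A / z := by positivity
      have h3 : 0 ≤ B / z ^ a := by positivity
      linarith
    nlinarith

lemma main_integral (c₁ c₂ a lam mu x y : ℝ) (h01 : 0 < c₁) (h02 : 0 < c₂)
    (ha : a = c₂ / c₁) (hlam : 0 < lam) (hmu : 0 < mu) (hx : 0 < x) (hy : 0 < y) :
    Tendsto (fun n : ℕ => (n:ℝ) ^ (1 + c₁ + c₁ * lam + c₂ * mu) *
      ∫ s in Ioi (1:ℝ), s ^ (-(2 + 1/c₁ + lam)) * (1 - s⁻¹) ^ ⌊(n:ℝ) ^ c₁ * x⌋₊ *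
        (1 - s ^ (-a)) ^ ⌊(n:ℝ) ^ c₂ * y⌋₊ * s ^ (-(a * mu)))
      atTop (𝓝 (∫ z in Ioi (0:ℝ), z ^ (-(2 + 1/c₁ + lam + a * mu)) *
        Real.exp (-(x / z + y / z ^ a)))) := by
  have haa : 0 < a := ha ▸ div_pos h02 h01
  have hca : c₁ * a = c₂ := by rw [ha]; field_simp
  set p : ℝ := 2 + 1/c₁ + lam + a * mu with hp
  have hp1 : 1 < p := by
    have h4 : 0 < 1/c₁ := by positivity
    have h5 : 0 < a * mu := by positivity
    simp only [hp]; linarith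
  set i : ℕ → ℕ := fun n => ⌊(n:ℝ) ^ c₁ * x⌋₊ with hi
  set j : ℕ → ℕ := fun n => ⌊(n:ℝ) ^ c₂ * y⌋₊ with hj
  set t : ℕ → ℝ := fun n => (n:ℝ) ^ c₁ with htdef
  set F : ℕ → ℝ → ℝ := fun n => (Ioi (t n)⁻¹).indicator
    (fun z => z ^ (-p) * (1 - (t n * z)⁻¹) ^ (i n) * (1 - (t n * z) ^ (-a)) ^ (j n)) with hF
  -- Step 1: eventual equality
  have step1 : ∀ᶠ n : ℕ in atTop, (n:ℝ) ^ (1 + c₁ + c₁ * lam + c₂ * mu) *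
      (∫ s in Ioi (1:ℝ), s ^ (-(2 + 1/c₁ + lam)) * (1 - s⁻¹) ^ (i n) *
        (1 - s ^ (-a)) ^ (j n) * s ^ (-(a * mu)))
      = ∫ z in Ioi (0:ℝ), F n z := by
    filter_upwards [eventually_ge_atTop 1] with n hn
    have hn0 : (0:ℝ) < n := by exact_mod_cast hn
    have ht0 : 0 < t n := Real.rpow_pos_of_pos hn0 c₁
    set g : ℝ → ℝ := fun s => s ^ (-(2 + 1/c₁ + lam)) * (1 - s⁻¹) ^ (i n) *
        (1 - s ^ (-a)) ^ (j n) * s ^ (-(a * mu)) with hg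
    have hcv := MeasureTheory.integral_comp_mul_left_Ioi g (t n)⁻¹ ht0
    rw [mul_inv_cancel₀ ht0.ne'] at hcv
    have key : (∫ s in Ioi (1:ℝ), g s) = t n * ∫ z in Ioi (t n)⁻¹, g (t n * z) := by
      rw [hcv, smul_eq_mul, ← mul_assoc, mul_inv_cancel₀ ht0.ne', one_mul]
    have hinner : ∀ z ∈ Ioi (t n)⁻¹, g (t n * z) =
        (t n) ^ (-p) * (z ^ (-p) * (1 - (t n * z)⁻¹) ^ (i n) * (1 - (t n * z) ^ (-a)) ^ (j n)) := by
      intro z hz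
      have hz0 : 0 < z := lt_trans (inv_pos.mpr ht0) hz
      have htz : 0 < t n * z := mul_pos ht0 hz0
      have e1 : (t n * z) ^ (-(2 + 1/c₁ + lam)) * (t n * z) ^ (-(a * mu))
          = (t n * z) ^ (-p) := by
        rw [← Real.rpow_add htz, hp]; ring_nf
      have e2 : (t n * z) ^ (-p) = (t n) ^ (-p) * z ^ (-p) :=
        Real.mul_rpow ht0.le hz0.le
      simp only [hg]
      calc (t n * z) ^ (-(2 + 1/c₁ + lam)) * (1 - (t n * z)⁻¹) ^ i n *
            (1 - (t n * z) ^ (-a)) ^ j n * (t n * z) ^ (-(a * mu))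
          = ((t n * z) ^ (-(2 + 1/c₁ + lam)) * (t n * z) ^ (-(a * mu))) *
            ((1 - (t n * z)⁻¹) ^ i n * (1 - (t n * z) ^ (-a)) ^ j n) := by ring
        _ = (t n) ^ (-p) * (z ^ (-p) * (1 - (t n * z)⁻¹) ^ i n *
              (1 - (t n * z) ^ (-a)) ^ j n) := by rw [e1, e2]; ring
    have hint2 : (∫ z in Ioi (t n)⁻¹, g (t n * z))
        = (t n) ^ (-p) * ∫ z in Ioi (t n)⁻¹,
            z ^ (-p) * (1 - (t n * z)⁻¹) ^ (i n) * (1 - (t n * z) ^ (-a)) ^ (j n) := by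
      rw [← MeasureTheory.integral_const_mul]
      refine MeasureTheory.setIntegral_congr_fun measurableSet_Ioi fun z hz => ?_
      rw [hinner z hz]; try ring
    have hind : (∫ z in Ioi (0:ℝ), F n z) = ∫ z in Ioi (t n)⁻¹,
        z ^ (-p) * (1 - (t n * z)⁻¹) ^ (i n) * (1 - (t n * z) ^ (-a)) ^ (j n) := by
      rw [hF]
      rw [MeasureTheory.setIntegral_indicator measurableSet_Ioi]
      congr 1
      rw [Set.Ioi_inter_Ioi, max_eq_right (inv_nonneg.mpr ht0.le)]
    rw [key, hint2, hind, ← mul_assoc, ← mul_assoc]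
    have hpow : (n:ℝ) ^ (1 + c₁ + c₁ * lam + c₂ * mu) * t n * (t n) ^ (-p) = 1 := by
      have h1 : t n * (t n) ^ (-p) = (t n) ^ (1 - p) := by
        nth_rewrite 1 [← Real.rpow_one (t n)]
        rw [← Real.rpow_add ht0]
        congr 1
        try ring
      have h2 : (t n) ^ (1 - p) = (n:ℝ) ^ (c₁ * (1 - p)) := by
        rw [htdef, ← Real.rpow_mul hn0.le]
      have h3 : (n:ℝ) ^ (1 + c₁ + c₁ * lam + c₂ * mu) * (n:ℝ) ^ (c₁ * (1 - p)) = 1 := by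
        rw [← Real.rpow_add hn0]
        have hz : 1 + c₁ + c₁ * lam + c₂ * mu + c₁ * (1 - p) = 0 := by
          simp only [hp]
          have hinv : c₁ * (1/c₁) = 1 := by field_simp
          nlinarith [hca]
        rw [hz, Real.rpow_zero]
      rw [mul_assoc, h1, h2, h3]
    rw [hpow, one_mul]
  -- Step 2: dominated convergence
  have step2 : Tendsto (fun n : ℕ => ∫ z in Ioi (0:ℝ), F n z) atTop
      (𝓝 (∫ z in Ioi (0:ℝ), z ^ (-p) * Real.exp (-(x / z + y / z ^ a)))) := by
    refine MeasureTheory.tendsto_integral_filter_of_dominated_convergence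
      (fun z => z ^ (-p) * Real.exp (-((x/2) / z + (y/2) / z ^ a))) ?_ ?_ ?_ ?_
    · refine Filter.Eventually.of_forall fun n => ?_
      refine (Measurable.indicator ?_ measurableSet_Ioi).aestronglyMeasurable
      fun_prop
    · -- bound
      have hev1 := (rpow_nat_tendsto c₁ h01).eventually_ge_atTop (2 / x)
      have hev2 := (rpow_nat_tendsto c₂ h02).eventually_ge_atTop (2 / y)
      filter_upwards [hev1, hev2, eventually_ge_atTop 1] with n h1 h2 hn
      rw [MeasureTheory.ae_restrict_iff' measurableSet_Ioi]
      refine Filter.Eventually.of_forall fun z hz => ?_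
      have hz0 : (0:ℝ) < z := hz
      have hn0 : (0:ℝ) < n := by exact_mod_cast hn
      have ht0 : 0 < t n := Real.rpow_pos_of_pos hn0 c₁
      have hn2 : (0:ℝ) < (n:ℝ) ^ c₂ := Real.rpow_pos_of_pos hn0 c₂
      have hbndpos : 0 < z ^ (-p) * Real.exp (-((x/2) / z + (y/2) / z ^ a)) := by
        have := Real.rpow_pos_of_pos hz0 (-p); positivity
      by_cases hmem : z ∈ Ioi (t n)⁻¹
      · have hzt : (t n)⁻¹ < z := hmem
        have htz1 : 1 < t n * z := by
          have h6 := mul_lt_mul_of_pos_left hzt ht0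
          rwa [mul_inv_cancel₀ ht0.ne'] at h6
        have htz0 : 0 < t n * z := lt_trans one_pos htz1
        have hu1 : (t n * z)⁻¹ < 1 := by rw [inv_lt_one_iff₀]; right; exact htz1
        have hu0 : 0 < (t n * z)⁻¹ := inv_pos.mpr htz0
        have hw1 : (t n * z) ^ (-a) < 1 :=
          Real.rpow_lt_one_of_one_lt_of_neg htz1 (by linarith)
        have hw0 : 0 < (t n * z) ^ (-a) := Real.rpow_pos_of_pos htz0 _
        simp only [hF]
        rw [Set.indicator_of_mem hmem]
        have hzp0 : (0:ℝ) < z ^ (-p) := Real.rpow_pos_of_pos hz0 (-p)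
        have hfpos : 0 ≤ z ^ (-p) * (1 - (t n * z)⁻¹) ^ i n * (1 - (t n * z) ^ (-a)) ^ j n := by
          have h1' : (0:ℝ) ≤ 1 - (t n * z)⁻¹ := by linarith
          have h2' : (0:ℝ) ≤ 1 - (t n * z) ^ (-a) := by linarith
          positivity
      -- bound each pow factor
        have key1 : (1 - (t n * z)⁻¹) ^ i n ≤ Real.exp (-((x/2) / z)) := by
          have e1 : (1 - (t n * z)⁻¹) ^ i n ≤ Real.exp (-((i n : ℝ) * (t n * z)⁻¹)) := by
            have hb : 1 - (t n * z)⁻¹ ≤ Real.exp (-(t n * z)⁻¹) := by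
              have := Real.add_one_le_exp (-(t n * z)⁻¹); linarith
            calc (1 - (t n * z)⁻¹) ^ i n ≤ (Real.exp (-(t n * z)⁻¹)) ^ i n :=
                  pow_le_pow_left₀ (by linarith) hb _
              _ = Real.exp (-((i n : ℝ) * (t n * z)⁻¹)) := by
                  rw [← Real.exp_nat_mul]; ring_nf
          refine e1.trans (Real.exp_le_exp.2 ?_)
          rw [neg_le_neg_iff]
          have hfl : t n * x - 1 ≤ (i n : ℝ) := (Nat.sub_one_lt_floor (t n * x)).le
          have hti : (t n)⁻¹ ≤ x / 2 := by
            have h2x : (0:ℝ) < 2 / x := by positivity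
            calc (t n)⁻¹ ≤ (2 / x)⁻¹ := inv_anti₀ h2x h1
              _ = x / 2 := by rw [inv_div]
          have h5 : (x/2) / z ≤ (x - (t n)⁻¹) / z := by gcongr; linarith
          have h6 : (x - (t n)⁻¹) / z = (t n * x - 1) * (t n * z)⁻¹ := by
            field_simp
          have h7 : (t n * x - 1) * (t n * z)⁻¹ ≤ (i n : ℝ) * (t n * z)⁻¹ :=
            mul_le_mul_of_nonneg_right hfl hu0.le
          calc (x/2) / z ≤ (x - (t n)⁻¹) / z := h5
            _ = (t n * x - 1) * (t n * z)⁻¹ := h6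
            _ ≤ (i n : ℝ) * (t n * z)⁻¹ := h7
        have hza : (0:ℝ) < z ^ a := Real.rpow_pos_of_pos hz0 a
        have htna : (t n) ^ a = (n:ℝ) ^ c₂ := by
          show ((n:ℝ) ^ c₁) ^ a = (n:ℝ) ^ c₂
          rw [← Real.rpow_mul (Nat.cast_nonneg n), hca]
        have hwform : (t n * z) ^ (-a) = ((n:ℝ) ^ c₂ * z ^ a)⁻¹ := by
          rw [Real.rpow_neg (mul_nonneg ht0.le hz0.le), Real.mul_rpow ht0.le hz0.le, htna]
        have key2 : (1 - (t n * z) ^ (-a)) ^ j n ≤ Real.exp (-((y/2) / z ^ a)) := by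
          have e1 : (1 - (t n * z) ^ (-a)) ^ j n
              ≤ Real.exp (-((j n : ℝ) * (t n * z) ^ (-a))) := by
            have hb : 1 - (t n * z) ^ (-a) ≤ Real.exp (-((t n * z) ^ (-a))) := by
              have := Real.add_one_le_exp (-((t n * z) ^ (-a))); linarith
            calc (1 - (t n * z) ^ (-a)) ^ j n
                ≤ (Real.exp (-((t n * z) ^ (-a)))) ^ j n :=
                  pow_le_pow_left₀ (by linarith) hb _
              _ = Real.exp (-((j n : ℝ) * (t n * z) ^ (-a))) := by
                  rw [← Real.exp_nat_mul]; ring_nf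
          refine e1.trans (Real.exp_le_exp.2 ?_)
          rw [neg_le_neg_iff]
          have hflj : (n:ℝ) ^ c₂ * y - 1 ≤ (j n : ℝ) := (Nat.sub_one_lt_floor ((n:ℝ) ^ c₂ * y)).le
          have htj : ((n:ℝ) ^ c₂)⁻¹ ≤ y / 2 := by
            have h2y : (0:ℝ) < 2 / y := by positivity
            calc ((n:ℝ) ^ c₂)⁻¹ ≤ (2 / y)⁻¹ := inv_anti₀ h2y h2
              _ = y / 2 := by rw [inv_div]
          have hv0 : (0:ℝ) < ((n:ℝ) ^ c₂ * z ^ a)⁻¹ := by positivity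
          have h5 : (y/2) / z ^ a ≤ (y - ((n:ℝ) ^ c₂)⁻¹) / z ^ a := by gcongr; linarith
          have h6 : (y - ((n:ℝ) ^ c₂)⁻¹) / z ^ a
              = ((n:ℝ) ^ c₂ * y - 1) * ((n:ℝ) ^ c₂ * z ^ a)⁻¹ := by
            field_simp
          have h7 : ((n:ℝ) ^ c₂ * y - 1) * ((n:ℝ) ^ c₂ * z ^ a)⁻¹
              ≤ (j n : ℝ) * ((n:ℝ) ^ c₂ * z ^ a)⁻¹ :=
            mul_le_mul_of_nonneg_right hflj hv0.le
          rw [hwform]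
          calc (y/2) / z ^ a ≤ (y - ((n:ℝ) ^ c₂)⁻¹) / z ^ a := h5
            _ = ((n:ℝ) ^ c₂ * y - 1) * ((n:ℝ) ^ c₂ * z ^ a)⁻¹ := h6
            _ ≤ (j n : ℝ) * ((n:ℝ) ^ c₂ * z ^ a)⁻¹ := h7
        have h1' : (0:ℝ) ≤ 1 - (t n * z)⁻¹ := by linarith
        have h2' : (0:ℝ) ≤ 1 - (t n * z) ^ (-a) := by linarith
        rw [Real.norm_eq_abs, abs_of_nonneg hfpos]
        calc z ^ (-p) * (1 - (t n * z)⁻¹) ^ i n * (1 - (t n * z) ^ (-a)) ^ j n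
            ≤ z ^ (-p) * Real.exp (-((x/2) / z)) * Real.exp (-((y/2) / z ^ a)) := by
              apply mul_le_mul
              · exact mul_le_mul le_rfl key1 (pow_nonneg h1' _) hzp0.le
              · exact key2
              · exact pow_nonneg h2' _
              · positivity
          _ = z ^ (-p) * Real.exp (-((x/2) / z + (y/2) / z ^ a)) := by
              rw [mul_assoc, ← Real.exp_add, ← neg_add]
      · simp only [hF]
        rw [Set.indicator_of_notMem hmem]
        simp only [norm_zero]
        exact hbndpos.le
    · exact bound_integrable p (x/2) (y/2) a hp1 (by positivity) (by positivity) haa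
    · -- pointwise limit
      rw [MeasureTheory.ae_restrict_iff' measurableSet_Ioi]
      refine Filter.Eventually.of_forall fun z hz => ?_
      have hz0 : (0:ℝ) < z := hz
      have hza : (0:ℝ) < z ^ a := Real.rpow_pos_of_pos hz0 a
      have ht_top : Tendsto t atTop atTop := rpow_nat_tendsto c₁ h01
      have hP1 : Tendsto (fun n => (1 - (t n * z)⁻¹) ^ i n) atTop
          (𝓝 (Real.exp (-(x/z)))) :=
        pow_tendsto_exp t i x z hz0 ht_top (floor_div_tendsto c₁ x h01 hx)
      have hP2' : Tendsto (fun n : ℕ => (1 - ((n:ℝ) ^ c₂ * z ^ a)⁻¹) ^ j n) atTop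
          (𝓝 (Real.exp (-(y / z ^ a)))) :=
        pow_tendsto_exp (fun n => (n:ℝ) ^ c₂) j y (z ^ a) hza
          (rpow_nat_tendsto c₂ h02) (floor_div_tendsto c₂ y h02 hy)
      have hP2 : Tendsto (fun n => (1 - (t n * z) ^ (-a)) ^ j n) atTop
          (𝓝 (Real.exp (-(y / z ^ a)))) := by
        refine hP2'.congr' ?_
        filter_upwards [eventually_ge_atTop 1] with n hn
        have hn0 : (0:ℝ) < n := by exact_mod_cast hn
        have ht0 : 0 < t n := Real.rpow_pos_of_pos hn0 c₁
        have htna : (t n) ^ a = (n:ℝ) ^ c₂ := by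
          show ((n:ℝ) ^ c₁) ^ a = (n:ℝ) ^ c₂
          rw [← Real.rpow_mul (Nat.cast_nonneg n), hca]
        have hwform : (t n * z) ^ (-a) = ((n:ℝ) ^ c₂ * z ^ a)⁻¹ := by
          rw [Real.rpow_neg (mul_nonneg ht0.le hz0.le), Real.mul_rpow ht0.le hz0.le, htna]
        rw [hwform]
      have hprod : Tendsto (fun n => z ^ (-p) * (1 - (t n * z)⁻¹) ^ i n *
          (1 - (t n * z) ^ (-a)) ^ j n) atTop
          (𝓝 (z ^ (-p) * Real.exp (-(x / z + y / z ^ a)))) := by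
        have h8 := (hP1.mul hP2).const_mul (z ^ (-p))
        have h9 : z ^ (-p) * (Real.exp (-(x/z)) * Real.exp (-(y / z ^ a)))
            = z ^ (-p) * Real.exp (-(x / z + y / z ^ a)) := by
          rw [← Real.exp_add]; ring_nf
        rw [h9] at h8
        refine h8.congr fun n => by ring
      refine hprod.congr' ?_
      filter_upwards [ht_top.eventually_gt_atTop z⁻¹] with n hn
      have htz0 : 0 < t n := lt_trans (inv_pos.mpr hz0) hn
      have hmem : z ∈ Ioi (t n)⁻¹ := by
        simp only [mem_Ioi]
        have h1 : (t n)⁻¹ < (z⁻¹)⁻¹ := by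
          apply inv_strictAnti₀ (inv_pos.mpr hz0) hn
        rwa [inv_inv] at h1
      simp only [hF]
      rw [Set.indicator_of_mem hmem]
  exact step2.congr' (step1.mono fun n h => h.symm)


/-- regular variation of the integral-form pmf `q(i,j)` of
`(T_{λ+1}(Z⁻¹), T̃_μ(Z^{-a}))` in the non-standard case `c₁ ≠ c₂` of the
preferential attachment model. -/
theorem stmt_16
    (lam mu c₁ c₂ : ℝ) (hlam : 0 < lam) (hmu : 0 < mu)
    (hc₁ : c₁ ∈ Set.Ioo (0 : ℝ) 1) (hc₂ : c₂ ∈ Set.Ioo (0 : ℝ) 1)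
    (hc : c₁ ≠ c₂) (a : ℝ) (ha : a = c₂ / c₁)
    (q : ℕ → ℕ → ℝ)
    (hq : ∀ i j : ℕ, q i j =
      (Gamma ((i : ℝ) + lam + 1) / (Gamma (lam + 1) * Gamma ((i : ℝ) + 1))) *
        (Gamma ((j : ℝ) + mu) / (Gamma mu * Gamma ((j : ℝ) + 1))) *
        (1 / c₁) *
        ∫ s in Set.Ioi (1 : ℝ),
          s ^ (-(2 + 1 / c₁ + lam)) * (1 - s⁻¹) ^ i * (1 - s ^ (-a)) ^ j *
            s ^ (-(a * mu))) :
    ∀ x y : ℝ, 0 < x → 0 < y →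
      Tendsto
        (fun n : ℕ => q ⌊(n : ℝ) ^ c₁ * x⌋₊ ⌊(n : ℝ) ^ c₂ * y⌋₊ /
          (n : ℝ) ^ (-(1 + c₁ + c₂)))
        atTop
        (𝓝 (x ^ lam * y ^ (mu - 1) / (c₁ * Gamma (lam + 1) * Gamma mu) *
            ∫ z in Set.Ioi (0 : ℝ),
              z ^ (-(2 + 1 / c₁ + lam + a * mu)) *
                exp (-(x / z + y / z ^ a)))) := by
  intro x y hx hy
  obtain ⟨h01, h11⟩ := hc₁
  obtain ⟨h02, h12⟩ := hc₂
  set i : ℕ → ℕ := fun n => ⌊(n:ℝ) ^ c₁ * x⌋₊ with hi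
  set j : ℕ → ℕ := fun n => ⌊(n:ℝ) ^ c₂ * y⌋₊ with hj
  set K : ℝ := (Gamma (lam + 1) * Gamma mu)⁻¹ * (1 / c₁) with hK
  set J : ℝ := ∫ z in Set.Ioi (0 : ℝ),
      z ^ (-(2 + 1 / c₁ + lam + a * mu)) * exp (-(x / z + y / z ^ a)) with hJ
  have hiTop : Tendsto i atTop atTop := floor_tendsto_atTop c₁ x h01 hx
  have hjTop : Tendsto j atTop atTop := floor_tendsto_atTop c₂ y h02 hy
  -- T1
  have hg1 : Tendsto (fun n : ℕ => Gamma ((i n : ℝ) + (lam + 1)) /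
      (Gamma ((i n : ℝ) + 1) * (i n : ℝ) ^ (lam + 1 - 1))) atTop (𝓝 1) :=
    (gamma_ratio (lam + 1) (by linarith)).comp hiTop
  have hr1 : Tendsto (fun n : ℕ => ((i n : ℝ) / (n:ℝ) ^ c₁) ^ lam) atTop (𝓝 (x ^ lam)) := by
    have hcont : ContinuousAt (fun r : ℝ => r ^ lam) x :=
      Real.continuousAt_rpow_const x lam (Or.inl hx.ne')
    exact hcont.tendsto.comp (floor_div_tendsto c₁ x h01 hx)
  have T1 : Tendsto (fun n : ℕ => Gamma ((i n : ℝ) + lam + 1) /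
      (Gamma ((i n : ℝ) + 1) * (n:ℝ) ^ (c₁ * lam))) atTop (𝓝 (x ^ lam)) := by
    have hmul := hg1.mul hr1
    rw [one_mul] at hmul
    refine hmul.congr' ?_
    filter_upwards [hiTop.eventually_ge_atTop 1, eventually_ge_atTop 1] with n hi1 hn1
    have hi0 : (0:ℝ) < (i n : ℝ) := by exact_mod_cast hi1
    have hn0 : (0:ℝ) < (n:ℝ) := by exact_mod_cast hn1
    have hnc : (0:ℝ) < (n:ℝ) ^ c₁ := Real.rpow_pos_of_pos hn0 c₁
    try simp only [Function.comp_apply]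
    rw [show (i n : ℝ) + (lam + 1) = (i n : ℝ) + lam + 1 from by ring,
      show lam + 1 - 1 = lam from by ring]
    rw [Real.div_rpow hi0.le hnc.le]
    rw [show (n:ℝ) ^ (c₁ * lam) = ((n:ℝ) ^ c₁) ^ lam from Real.rpow_mul hn0.le c₁ lam]
    have e1 : (0:ℝ) < (i n : ℝ) ^ lam := Real.rpow_pos_of_pos hi0 lam
    have e2 : (0:ℝ) < ((n:ℝ) ^ c₁) ^ lam := Real.rpow_pos_of_pos hnc lam
    have e3 : (0:ℝ) < Gamma ((i n : ℝ) + 1) := Real.Gamma_pos_of_pos (by positivity)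
    field_simp
  -- T2
  have hg2 : Tendsto (fun n : ℕ => Gamma ((j n : ℝ) + mu) /
      (Gamma ((j n : ℝ) + 1) * (j n : ℝ) ^ (mu - 1))) atTop (𝓝 1) :=
    (gamma_ratio mu hmu).comp hjTop
  have hr2 : Tendsto (fun n : ℕ => ((j n : ℝ) / (n:ℝ) ^ c₂) ^ (mu - 1)) atTop
      (𝓝 (y ^ (mu - 1))) := by
    have hcont : ContinuousAt (fun r : ℝ => r ^ (mu - 1)) y :=
      Real.continuousAt_rpow_const y (mu - 1) (Or.inl hy.ne')
    exact hcont.tendsto.comp (floor_div_tendsto c₂ y h02 hy)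
  have T2 : Tendsto (fun n : ℕ => Gamma ((j n : ℝ) + mu) /
      (Gamma ((j n : ℝ) + 1) * (n:ℝ) ^ (c₂ * (mu - 1)))) atTop (𝓝 (y ^ (mu - 1))) := by
    have hmul := hg2.mul hr2
    rw [one_mul] at hmul
    refine hmul.congr' ?_
    filter_upwards [hjTop.eventually_ge_atTop 1, eventually_ge_atTop 1] with n hj1 hn1
    have hj0 : (0:ℝ) < (j n : ℝ) := by exact_mod_cast hj1
    have hn0 : (0:ℝ) < (n:ℝ) := by exact_mod_cast hn1
    have hnc : (0:ℝ) < (n:ℝ) ^ c₂ := Real.rpow_pos_of_pos hn0 c₂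
    try simp only [Function.comp_apply]
    rw [Real.div_rpow hj0.le hnc.le]
    rw [show (n:ℝ) ^ (c₂ * (mu - 1)) = ((n:ℝ) ^ c₂) ^ (mu - 1) from
      Real.rpow_mul hn0.le c₂ (mu - 1)]
    have e1 : (0:ℝ) < (j n : ℝ) ^ (mu - 1) := Real.rpow_pos_of_pos hj0 _
    have e2 : (0:ℝ) < ((n:ℝ) ^ c₂) ^ (mu - 1) := Real.rpow_pos_of_pos hnc _
    have e3 : (0:ℝ) < Gamma ((j n : ℝ) + 1) := Real.Gamma_pos_of_pos (by positivity)
    field_simp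
  -- T3
  have T3 := main_integral c₁ c₂ a lam mu x y h01 h02 ha hlam hmu hx hy
  -- combine
  have Tprod : Tendsto (fun n : ℕ =>
      (Gamma ((i n : ℝ) + lam + 1) / (Gamma ((i n : ℝ) + 1) * (n:ℝ) ^ (c₁ * lam))) *
      (Gamma ((j n : ℝ) + mu) / (Gamma ((j n : ℝ) + 1) * (n:ℝ) ^ (c₂ * (mu - 1)))) *
      (K * ((n:ℝ) ^ (1 + c₁ + c₁ * lam + c₂ * mu) *
        ∫ s in Set.Ioi (1 : ℝ), s ^ (-(2 + 1 / c₁ + lam)) * (1 - s⁻¹) ^ (i n) *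
          (1 - s ^ (-a)) ^ (j n) * s ^ (-(a * mu)))))
      atTop (𝓝 (x ^ lam * y ^ (mu - 1) * (K * J))) :=
    (T1.mul T2).mul (T3.const_mul K)
  have hqeq : ∀ᶠ n : ℕ in atTop,
      q (i n) (j n) / (n : ℝ) ^ (-(1 + c₁ + c₂)) =
      (Gamma ((i n : ℝ) + lam + 1) / (Gamma ((i n : ℝ) + 1) * (n:ℝ) ^ (c₁ * lam))) *
      (Gamma ((j n : ℝ) + mu) / (Gamma ((j n : ℝ) + 1) * (n:ℝ) ^ (c₂ * (mu - 1)))) *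
      (K * ((n:ℝ) ^ (1 + c₁ + c₁ * lam + c₂ * mu) *
        ∫ s in Set.Ioi (1 : ℝ), s ^ (-(2 + 1 / c₁ + lam)) * (1 - s⁻¹) ^ (i n) *
          (1 - s ^ (-a)) ^ (j n) * s ^ (-(a * mu)))) := by
    filter_upwards [eventually_ge_atTop 1] with n hn1
    have hn0 : (0:ℝ) < (n:ℝ) := by exact_mod_cast hn1
    rw [hq]
    set I' : ℝ := ∫ s in Set.Ioi (1 : ℝ), s ^ (-(2 + 1 / c₁ + lam)) * (1 - s⁻¹) ^ (i n) *
        (1 - s ^ (-a)) ^ (j n) * s ^ (-(a * mu)) with hI'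
    rw [Real.rpow_neg hn0.le, div_inv_eq_mul]
    have hbeta : (n:ℝ) ^ (1 + c₁ + c₁ * lam + c₂ * mu)
        = (n:ℝ) ^ (1 + c₁ + c₂) * ((n:ℝ) ^ (c₁ * lam) * (n:ℝ) ^ (c₂ * (mu - 1))) := by
      rw [← Real.rpow_add hn0, ← Real.rpow_add hn0]
      congr 1
      ring
    rw [hbeta, hK]
    have e1 : (0:ℝ) < Gamma (lam + 1) := Real.Gamma_pos_of_pos (by linarith)
    have e2 : (0:ℝ) < Gamma mu := Real.Gamma_pos_of_pos hmu
    have e3 : (0:ℝ) < Gamma ((i n : ℝ) + 1) := Real.Gamma_pos_of_pos (by positivity)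
    have e4 : (0:ℝ) < Gamma ((j n : ℝ) + 1) := Real.Gamma_pos_of_pos (by positivity)
    have e5 : (0:ℝ) < (n:ℝ) ^ (c₁ * lam) := Real.rpow_pos_of_pos hn0 _
    have e6 : (0:ℝ) < (n:ℝ) ^ (c₂ * (mu - 1)) := Real.rpow_pos_of_pos hn0 _
    field_simp
  have final := Tprod.congr' (hqeq.mono fun n h => h.symm)
  have hval : x ^ lam * y ^ (mu - 1) * (K * J)
      = x ^ lam * y ^ (mu - 1) / (c₁ * Gamma (lam + 1) * Gamma mu) * J := by
    rw [hK]; ring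
  rwa [hval] at final
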